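/- Let A, B be unital C*-algebras, H a complex Hilbert space, and σ : B → B(H) a *-homomorphism. Then for all completely positive maps T1, T2 : A → B, β(σ∘T1, σ∘T2) ≤ β(T1, T2). -/

import Mathlib

noncomputable section

/-- A map between star algebras is *completely positive* if, for every `n`, its
entrywise application to `n × n` matrices maps positive elements (i.e. elements of the form
`star y * y`) to positive elements. -/
def IsCPMap {A B : Type*} [NonUnitalSemiring A] [StarRing A]
    [NonUnitalSemiring B] [StarRing B] (T : A → B) : Prop :=
  ∀ (n : ℕ) (x : Matrix (Fin n) (Fin n) A),
    (∃ y : Matrix (Fin n) (Fin n) A, x = star y * y) →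
      ∃ z : Matrix (Fin n) (Fin n) B, x.map T = star z * z

/-- `That : A → M₂(B)` is a cp extension of the pair `(T₁, T₂)`: it is completely positive
and its diagonal entries are `T₁` and `T₂`. -/
def IsCPExtension {A B : Type*} [CStarAlgebra A] [CStarAlgebra B]
    (T₁ T₂ : A → B) (That : A →ₗ[ℂ] Matrix (Fin 2) (Fin 2) B) : Prop :=
  IsCPMap That ∧ (∀ a : A, That a 0 0 = T₁ a) ∧ (∀ a : A, That a 1 1 = T₂ a)

/-- The Bures distance between two completely positive maps `T₁ T₂ : A → B`:
`β(T₁,T₂) = √ inf { ‖T₁ 1 + T₂ 1 - T̂₁₂ 1 - T̂₂₁ 1‖ | T̂ a cp extension of (T₁, T₂) }`. -/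
noncomputable def buresDist {A B : Type*} [CStarAlgebra A] [CStarAlgebra B]
    (T₁ T₂ : A → B) : ℝ :=
  Real.sqrt (sInf { r : ℝ | ∃ That : A →ₗ[ℂ] Matrix (Fin 2) (Fin 2) B,
    IsCPExtension T₁ T₂ That ∧ r = ‖T₁ 1 + T₂ 1 - That 1 0 1 - That 1 1 0‖ })


/-- additive star-multiplicative maps send `star z * z` matrices to such. -/
lemma map_star_mul_matrix' {B C : Type*} [NonUnitalSemiring B] [StarRing B]
    [NonUnitalSemiring C] [StarRing C] (f : B →+ C)
    (hmul : ∀ x y : B, f (x * y) = f x * f y)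
    (hstar : ∀ x : B, f (star x) = star (f x))
    {n : ℕ} (z : Matrix (Fin n) (Fin n) B) :
    (star z * z).map f = star (z.map f) * (z.map f) := by
  ext i j
  simp [Matrix.mul_apply, Matrix.map_apply, Matrix.star_apply, map_sum, hmul, hstar]

/-- The block-diagonal extension of a pair of linear maps. -/
def diagExt {A B : Type*} [CStarAlgebra A] [CStarAlgebra B]
    (S₁ S₂ : A →ₗ[ℂ] B) : A →ₗ[ℂ] Matrix (Fin 2) (Fin 2) B where
  toFun a := Matrix.diagonal ![S₁ a, S₂ a]
  map_add' a b := by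
    ext i j
    fin_cases i <;> fin_cases j <;> simp [Matrix.diagonal]
  map_smul' c a := by
    ext i j
    fin_cases i <;> fin_cases j <;> simp [Matrix.diagonal]

lemma diagExt_isCPExtension {A B : Type*} [CStarAlgebra A] [CStarAlgebra B]
    (S₁ S₂ : A →ₗ[ℂ] B) (h₁ : IsCPMap S₁) (h₂ : IsCPMap S₂) :
    IsCPExtension S₁ S₂ (diagExt S₁ S₂) := by
  refine ⟨?_, fun a => by simp [diagExt, Matrix.diagonal], fun a => by simp [diagExt, Matrix.diagonal]⟩
  intro n x hx
  obtain ⟨z₁, hz₁⟩ := h₁ n x hx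
  obtain ⟨z₂, hz₂⟩ := h₂ n x hx
  refine ⟨Matrix.of fun i j => Matrix.diagonal ![z₁ i j, z₂ i j], ?_⟩
  ext i j p q
  have e₁ : S₁ (x i j) = ∑ k, star (z₁ k i) * z₁ k j := by
    have := congrFun (congrFun hz₁ i) j
    simpa [Matrix.mul_apply, Matrix.map_apply, Matrix.star_apply] using this
  have e₂ : S₂ (x i j) = ∑ k, star (z₂ k i) * z₂ k j := by
    have := congrFun (congrFun hz₂ i) j
    simpa [Matrix.mul_apply, Matrix.map_apply, Matrix.star_apply] using this
  fin_cases p <;> fin_cases q <;>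
    simp [Matrix.mul_apply, Matrix.map_apply, Matrix.star_apply, diagExt,
      Matrix.diagonal, Fin.sum_univ_two, e₁, e₂, Matrix.sum_apply]

theorem stmt10 {A B : Type*} [CStarAlgebra A] [CStarAlgebra B]
    {H : Type*} [NormedAddCommGroup H] [InnerProductSpace ℂ H] [CompleteSpace H]
    (σ : B →⋆ₙₐ[ℂ] (H →L[ℂ] H))
    (T₁ T₂ : A →ₗ[ℂ] B) (hT₁ : IsCPMap T₁) (hT₂ : IsCPMap T₂) :
    buresDist (fun a => σ (T₁ a)) (fun a => σ (T₂ a)) ≤ buresDist (⇑T₁) (⇑T₂) := by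
  unfold buresDist
  apply Real.sqrt_le_sqrt
  have hSne : Set.Nonempty { r : ℝ | ∃ That : A →ₗ[ℂ] Matrix (Fin 2) (Fin 2) B,
      IsCPExtension (⇑T₁) (⇑T₂) That ∧ r = ‖T₁ 1 + T₂ 1 - That 1 0 1 - That 1 1 0‖ } :=
    ⟨_, diagExt T₁ T₂, diagExt_isCPExtension T₁ T₂ hT₁ hT₂, rfl⟩
  have hbdd : BddBelow { r : ℝ | ∃ That : A →ₗ[ℂ] Matrix (Fin 2) (Fin 2) (H →L[ℂ] H),
      IsCPExtension (fun a => σ (T₁ a)) (fun a => σ (T₂ a)) That ∧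
        r = ‖(fun a => σ (T₁ a)) 1 + (fun a => σ (T₂ a)) 1 - That 1 0 1 - That 1 1 0‖ } := by
    refine ⟨0, ?_⟩
    rintro r ⟨That, -, rfl⟩
    exact norm_nonneg _
  apply le_csInf hSne
  rintro b ⟨That, ⟨hcp, h11, h22⟩, rfl⟩
  -- push the extension forward along σ
  let σₗ : B →ₗ[ℂ] (H →L[ℂ] H) :=
    { toFun := σ, map_add' := map_add σ, map_smul' := map_smul σ }
  let That' : A →ₗ[ℂ] Matrix (Fin 2) (Fin 2) (H →L[ℂ] H) :=
    (LinearMap.mapMatrix σₗ).comp That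
  have hThat'apply : ∀ (a : A) (p q : Fin 2), That' a p q = σ (That a p q) := by
    intro a p q; rfl
  have hext' : IsCPExtension (fun a => σ (T₁ a)) (fun a => σ (T₂ a)) That' := by
    refine ⟨?_, fun a => by rw [hThat'apply, h11], fun a => by rw [hThat'apply, h22]⟩
    intro n x hx
    obtain ⟨z, hz⟩ := hcp n x hx
    refine ⟨z.map (fun m => m.map σ), ?_⟩
    have key := map_star_mul_matrix'
      ((AddMonoidHomClass.toAddMonoidHom σ).mapMatrix :
        Matrix (Fin 2) (Fin 2) B →+ Matrix (Fin 2) (Fin 2) (H →L[ℂ] H))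
      (by
        intro u v
        ext p q
        simp [Matrix.mul_apply, Matrix.map_apply, map_sum, map_mul])
      (by
        intro u
        ext p q
        simp [Matrix.star_apply, Matrix.map_apply, map_star]) z
    have : x.map That' = (x.map That).map
        (fun m => m.map σ) := by
      ext i j p q; rfl
    rw [this, hz]
    exact key
  refine le_trans (csInf_le hbdd ⟨That', hext', rfl⟩) ?_
  have : (fun a => σ (T₁ a)) 1 + (fun a => σ (T₂ a)) 1 - That' 1 0 1 - That' 1 1 0
      = σ (T₁ 1 + T₂ 1 - That 1 0 1 - That 1 1 0) := by
    simp only [hThat'apply, map_add, map_sub]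
  rw [this]
  exact NonUnitalStarAlgHom.norm_apply_le σ _
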